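/- If a finite dataset D is sophisticated rationalizable, then it satisfies Condition 2: there is no sequence k₁,…,k_L with x^{k_l} ≠ x^{k_{l+1}} and x^{k_l} ∈ B^{k_{l+1}}(x₁^{k_l}) ⊆ B^{k_l}(x₁^{k_l}) for each l (cyclically). -/

import Mathlib

def maxSet {X : Type} (S : Set X) (pref : X → X → Prop) : Set X :=
  {x | x ∈ S ∧ ∀ y ∈ S, pref x y}

def WeakOrder {X : Type} (pref : X → X → Prop) : Prop :=
  (∀ a b, pref a b ∨ pref b a) ∧ Transitive pref

def sec1 {X₁ X₂ : Type} (B : Set (X₁ × X₂)) (a : X₁) : Set (X₁ × X₂) :=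
  {y ∈ B | y.1 = a}

def sec2 {X₁ X₂ : Type} (B : Set (X₁ × X₂)) (b : X₂) : Set (X₁ × X₂) :=
  {y ∈ B | y.2 = b}

def NSARP {K X₁ X₂ : Type} (x : K → X₁ × X₂) (B : K → Set (X₁ × X₂)) : Prop :=
  ¬ ∃ (L : ℕ) (k : Fin (L + 1) → K), ∀ l : Fin (L + 1),
      x (k l) ≠ x (k (l + 1)) ∧ x (k l) ∈ sec1 (B (k (l + 1))) (x (k (l + 1))).1

def NNSARP {K X₁ X₂ : Type} (x : K → X₁ × X₂) (B : K → Set (X₁ × X₂)) : Prop :=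
  ¬ ∃ (L : ℕ) (k : Fin (L + 1) → K), ∀ l : Fin (L + 1),
      x (k l) ≠ x (k (l + 1)) ∧ x (k l) ∈ sec2 (B (k (l + 1))) (x (k (l + 1))).2

def Cond1 {K X₁ X₂ : Type} (x : K → X₁ × X₂) (B : K → Set (X₁ × X₂)) : Prop :=
  ∀ S : Set K, S.Nonempty →
    ¬ (⋃ k ∈ S, sec1 (B k) (x k).1) ⊆ ⋃ k ∈ S, (B k \ sec1 (B k) (x k).1)

def Cond2 {K X₁ X₂ : Type} (x : K → X₁ × X₂) (B : K → Set (X₁ × X₂)) : Prop :=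
  ¬ ∃ (L : ℕ) (k : Fin (L + 1) → K), ∀ l : Fin (L + 1),
      x (k l) ≠ x (k (l + 1)) ∧ x (k l) ∈ sec1 (B (k (l + 1))) (x (k l)).1 ∧
      sec1 (B (k (l + 1))) (x (k l)).1 ⊆ sec1 (B (k l)) (x (k l)).1

def NaiveRat {K X₁ X₂ : Type} (x : K → X₁ × X₂) (B : K → Set (X₁ × X₂)) : Prop :=
  ∃ p1 p2 : X₁ × X₂ → X₁ × X₂ → Prop, WeakOrder p1 ∧ WeakOrder p2 ∧
    ∀ k, (∃ z, maxSet (B k) p1 = {z} ∧ z ∈ sec1 (B k) (x k).1) ∧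
      maxSet (sec1 (B k) (x k).1) p2 = {x k}

def NaiveNashRat {K X₁ X₂ : Type} (x : K → X₁ × X₂) (B : K → Set (X₁ × X₂)) : Prop :=
  ∃ p1 p2 : X₁ × X₂ → X₁ × X₂ → Prop, WeakOrder p1 ∧ WeakOrder p2 ∧
    ∀ k, x k ∈ maxSet (sec2 (B k) (x k).2) p1 ∧
      maxSet (sec1 (B k) (x k).1) p2 = {x k}

def StrictNaiveNashRat {K X₁ X₂ : Type} (x : K → X₁ × X₂) (B : K → Set (X₁ × X₂)) : Prop :=
  ∃ p1 p2 : X₁ × X₂ → X₁ × X₂ → Prop, WeakOrder p1 ∧ WeakOrder p2 ∧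
    ∀ k, maxSet (sec2 (B k) (x k).2) p1 = {x k} ∧
      maxSet (sec1 (B k) (x k).1) p2 = {x k}

def SophRat {K X₁ X₂ : Type} (x : K → X₁ × X₂) (B : K → Set (X₁ × X₂)) : Prop :=
  ∃ p1 p2 : X₁ × X₂ → X₁ × X₂ → Prop, WeakOrder p1 ∧ WeakOrder p2 ∧
    ∀ k, maxSet (⋃ a ∈ Prod.fst '' B k, maxSet (sec1 (B k) a) p2) p1 = {x k}

theorem sophisticated_rationalizable_implies_Cond2
    {K X₁ X₂ : Type} [Fintype K]
    (x : K → X₁ × X₂) (B : K → Set (X₁ × X₂)) (hmem : ∀ k, x k ∈ B k)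
    (h : SophRat x B) : Cond2 x B := by
  rintro ⟨L, k, hcyc⟩
  obtain ⟨p1, p2, ⟨h1tot, h1trans⟩, ⟨h2tot, h2trans⟩, hmax⟩ := h
  have hx2 : ∀ j, x j ∈ maxSet (sec1 (B j) (x j).1) p2 := by
    intro j
    have hj : x j ∈ maxSet (⋃ a ∈ Prod.fst '' B j, maxSet (sec1 (B j) a) p2) p1 := by
      rw [hmax j]; rfl
    obtain ⟨hmem', _⟩ := hj
    simp only [Set.mem_iUnion] at hmem'
    obtain ⟨a, _, ha⟩ := hmem'
    have hfst : (x j).1 = a := (ha.1).2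
    rwa [hfst]
  have hstrict : ∀ l : Fin (L+1),
      p1 (x (k (l+1))) (x (k l)) ∧ ¬ p1 (x (k l)) (x (k (l+1))) := by
    intro l
    obtain ⟨hne, hin, hsub⟩ := hcyc l
    have hm2 : x (k l) ∈ maxSet (sec1 (B (k (l+1))) (x (k l)).1) p2 :=
      ⟨hin, fun y hy => (hx2 (k l)).2 y (hsub hy)⟩
    have hU : x (k l) ∈ ⋃ a ∈ Prod.fst '' B (k (l+1)),
        maxSet (sec1 (B (k (l+1))) a) p2 := by
      simp only [Set.mem_iUnion]
      exact ⟨(x (k l)).1, ⟨x (k l), hin.1, rfl⟩, hm2⟩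
    have hxl1 : x (k (l+1)) ∈ maxSet (⋃ a ∈ Prod.fst '' B (k (l+1)),
        maxSet (sec1 (B (k (l+1))) a) p2) p1 := by
      rw [hmax (k (l+1))]; rfl
    refine ⟨hxl1.2 _ hU, fun hp => ?_⟩
    have hmem2 : x (k l) ∈ maxSet (⋃ a ∈ Prod.fst '' B (k (l+1)),
        maxSet (sec1 (B (k (l+1))) a) p2) p1 :=
      ⟨hU, fun y hy => h1trans hp (hxl1.2 y hy)⟩
    rw [hmax (k (l+1))] at hmem2
    exact hne hmem2
  have hrefl : ∀ a, p1 a a := fun a => (h1tot a a).elim id id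
  open Fin.NatCast in
  have hchain : ∀ n : ℕ, ∀ l : Fin (L+1), p1 (x (k (l + (n : Fin (L+1))))) (x (k l)) := by
    intro n
    induction n with
    | zero => intro l; simpa using hrefl (x (k l))
    | succ n ih =>
      intro l
      have hc : ((n + 1 : ℕ) : Fin (L+1)) = (n : Fin (L+1)) + 1 := by push_cast; ring
      rw [hc, ← add_assoc]
      exact h1trans (hstrict (l + (n : Fin (L+1)))).1 (ih l)
  open Fin.NatCast in
  have hfin : (1 : Fin (L+1)) + (L : Fin (L+1)) = 0 := by
    have h3 : ((L + 1 : ℕ) : Fin (L+1)) = 0 := Fin.natCast_self _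
    have h2 : (1 : Fin (L+1)) + (L : Fin (L+1)) = ((L + 1 : ℕ) : Fin (L+1)) := by
      push_cast; exact add_comm _ _
    exact h2.trans h3
  have h01 : p1 (x (k 0)) (x (k 1)) := by
    have := hchain L 1
    rwa [hfin] at this
  have := (hstrict 0).2
  rw [zero_add] at this
  exact this h01
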